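/- There is a canonical bijection between rooted trees with n inputs (satisfying val(v_0) ≥ 3 at the root and val(v) ≥ 4 at every other vertex) and sequences (P_2, P_3, …, P_{n−1}) of partitions of the set {1,…,n} such that P_2 = {{1},…,{n}} and for each 3 ≤ k ≤ n−1, either P_{k−1} = P_k or P_{k−1} is obtained from P_k by splitting some parts of P_k, where each split part of P_k has cardinality exactly k and is split into at least 3 pieces. -/

import Mathlib

/-! STATEMENT 10: canonical bijection between rooted trees with n (labeled) inputs
(`val(v₀) ≥ 3` at the root, `val(v) ≥ 4` elsewhere) and descending sequences
`(P₂, P₃, …, P_{n−1})` of partitions of `{1,…,n}` with `P₂` the discrete partition and,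
for each `3 ≤ k ≤ n−1`, either `P_{k−1} = P_k` or `P_{k−1}` obtained from `P_k` by
splitting some parts, each split part having cardinality exactly `k` and being split
into at least 3 pieces.

A rooted tree with n inputs is encoded by the laminar family `F` of the sets
`D_T(v) ⊆ Fin n` of inputs lying below the non-root vertices `v`; each member of `F` has
≥ 3 elements, each non-root vertex has ≥ 3 children (`val ≥ 4`), and the root has ≥ 2
children (`val(v₀) ≥ 3`).  A sequence of partitions is encoded as a function
`ℕ → Finpartition univ` constant below index 2 and above index `n − 1`. -/

open Finset

def childSets (n : ℕ) (F : Finset (Finset (Fin n))) (S : Finset (Fin n)) :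
    Finset (Finset (Fin n)) :=
  F.filter fun T => T ⊂ S ∧ ∀ U ∈ F, ¬ (T ⊂ U ∧ U ⊂ S)

def freeIn (n : ℕ) (F : Finset (Finset (Fin n))) (S : Finset (Fin n)) : Finset (Fin n) :=
  S.filter fun x => ∀ T ∈ F, T ⊂ S → x ∉ T

def childCount (n : ℕ) (F : Finset (Finset (Fin n))) (S : Finset (Fin n)) : ℕ :=
  (childSets n F S).card + (freeIn n F S).card

def rootChildSets (n : ℕ) (F : Finset (Finset (Fin n))) : Finset (Finset (Fin n)) :=
  F.filter fun T => ∀ U ∈ F, ¬ T ⊂ U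

def rootFree (n : ℕ) (F : Finset (Finset (Fin n))) : Finset (Fin n) :=
  Finset.univ.filter fun x => ∀ T ∈ F, x ∉ T

def rootChildCount (n : ℕ) (F : Finset (Finset (Fin n))) : ℕ :=
  (rootChildSets n F).card + (rootFree n F).card

/-- `F` encodes a rooted tree with `n` inputs, with `val(v₀) ≥ 3` and `val(v) ≥ 4` for
`v ≠ v₀`. -/
def IsTreeFam (n : ℕ) (F : Finset (Finset (Fin n))) : Prop :=
  (∀ S ∈ F, ∀ T ∈ F, S ⊆ T ∨ T ⊆ S ∨ Disjoint S T) ∧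
  (∀ S ∈ F, 3 ≤ S.card) ∧
  (∀ S ∈ F, 3 ≤ childCount n F S) ∧
  2 ≤ rootChildCount n F

/-- The rooted trees with `n` inputs. -/
def NRootedTree (n : ℕ) := {F : Finset (Finset (Fin n)) // IsTreeFam n F}

/-- `Q ≥ₖ P`: either `Q = P`, or `Q` is obtained from `P` by splitting some parts of
`P`, where each split part of `P` has cardinality exactly `k` and is split into at least
3 pieces.  (`Q` refines `P`, and each part of `P` is either a part of `Q` or has
cardinality `k` and contains at least 3 parts of `Q`.) -/
def StepRel (n k : ℕ) (Q P : Finpartition (Finset.univ : Finset (Fin n))) : Prop :=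
  (∀ S ∈ Q.parts, ∃ T ∈ P.parts, S ⊆ T) ∧
  ∀ T ∈ P.parts,
    (Q.parts.filter (· ⊆ T) = {T}) ∨ (T.card = k ∧ 3 ≤ (Q.parts.filter (· ⊆ T)).card)

/-- Descending sequences `(P₂, …, P_{n−1})` of partitions of `{1,…,n}`, starting at the
discrete partition, with `P_{k−1} ≥ₖ P_k` at each step; the function is padded
constantly outside the index range `[2, n−1]`. -/
def PartitionChain (n : ℕ) :=
  {P : ℕ → Finpartition (Finset.univ : Finset (Fin n)) //
    (∀ S ∈ (P 2).parts, S.card = 1) ∧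
    (∀ k, 3 ≤ k → k ≤ n - 1 → StepRel n k (P (k - 1)) (P k)) ∧
    (∀ k, k ≤ 2 → P k = P 2) ∧
    (∀ k, n - 1 ≤ k → P k = P (n - 1))}

namespace RTPC10

variable {n : ℕ}

def Laminar (F : Finset (Finset (Fin n))) : Prop :=
  ∀ S ∈ F, ∀ T ∈ F, S ⊆ T ∨ T ⊆ S ∨ Disjoint S T

def levelF (F : Finset (Finset (Fin n))) (k : ℕ) : Finset (Finset (Fin n)) :=
  F.filter fun S => S.card ≤ k

def maxl (F : Finset (Finset (Fin n))) (k : ℕ) : Finset (Finset (Fin n)) :=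
  (levelF F k).filter fun S => ∀ T ∈ levelF F k, ¬ S ⊂ T

def treeParts (F : Finset (Finset (Fin n))) (k : ℕ) : Finset (Finset (Fin n)) :=
  maxl F k ∪
    (Finset.univ.filter fun x => ∀ T ∈ maxl F k, x ∉ T).image fun x => ({x} : Finset (Fin n))

lemma mem_levelF {F : Finset (Finset (Fin n))} {k : ℕ} {S : Finset (Fin n)} :
    S ∈ levelF F k ↔ S ∈ F ∧ S.card ≤ k := mem_filter

lemma mem_maxl {F : Finset (Finset (Fin n))} {k : ℕ} {S : Finset (Fin n)} :
    S ∈ maxl F k ↔ (S ∈ F ∧ S.card ≤ k) ∧ ∀ T ∈ levelF F k, ¬ S ⊂ T := by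
  rw [maxl, mem_filter, mem_levelF]

lemma maxl_mem_F {F : Finset (Finset (Fin n))} {k : ℕ} {S : Finset (Fin n)}
    (h : S ∈ maxl F k) : S ∈ F := (mem_maxl.1 h).1.1

lemma exists_maxl_superset {F : Finset (Finset (Fin n))} {k : ℕ} {S : Finset (Fin n)}
    (hS : S ∈ levelF F k) : ∃ U ∈ maxl F k, S ⊆ U := by
  obtain ⟨U, hU, hmax⟩ := Finset.exists_max_image ((levelF F k).filter fun T => S ⊆ T)
    Finset.card ⟨S, by simp [hS]⟩
  rw [mem_filter] at hU
  refine ⟨U, ?_, hU.2⟩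
  rw [mem_maxl]
  refine ⟨mem_levelF.1 hU.1, fun T hT hUT => ?_⟩
  have hT' : T ∈ (levelF F k).filter fun T => S ⊆ T :=
    mem_filter.2 ⟨hT, hU.2.trans hUT.subset⟩
  exact absurd (hmax T hT') (not_le.2 (card_lt_card hUT))

lemma maxl_disjoint {F : Finset (Finset (Fin n))} (hlam : Laminar F) {k : ℕ}
    {S T : Finset (Fin n)} (hS : S ∈ maxl F k) (hT : T ∈ maxl F k) (hne : S ≠ T) :
    Disjoint S T := by
  rw [mem_maxl] at hS hT
  rcases hlam S hS.1.1 T hT.1.1 with h | h | h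
  · exact absurd (ssubset_of_subset_of_ne h hne) (hS.2 T (mem_levelF.2 hT.1))
  · exact absurd (ssubset_of_subset_of_ne h hne.symm) (hT.2 S (mem_levelF.2 hS.1))
  · exact h

lemma mem_treeParts {F : Finset (Finset (Fin n))} {k : ℕ} {S : Finset (Fin n)} :
    S ∈ treeParts F k ↔ S ∈ maxl F k ∨ ∃ x, (∀ T ∈ maxl F k, x ∉ T) ∧ S = {x} := by
  unfold treeParts
  rw [mem_union, mem_image]
  simp only [mem_filter, mem_univ, true_and]
  constructor
  · rintro (h | ⟨x, hx, rfl⟩)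
    exacts [Or.inl h, Or.inr ⟨x, hx, rfl⟩]
  · rintro (h | ⟨x, hx, rfl⟩)
    exacts [Or.inl h, Or.inr ⟨x, hx, rfl⟩]

/-- The partition at level `k` associated to a laminar family. -/
def treePartition (F : Finset (Finset (Fin n))) (hlam : Laminar F)
    (hcard : ∀ S ∈ F, 3 ≤ S.card) (k : ℕ) :
    Finpartition (Finset.univ : Finset (Fin n)) where
  parts := treeParts F k
  supIndep := by
    rw [Finset.supIndep_iff_pairwiseDisjoint]
    intro S hS T hT hne
    rw [Finset.mem_coe, mem_treeParts] at hS hT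
    rcases hS with hS | ⟨x, hx, rfl⟩ <;> rcases hT with hT | ⟨y, hy, rfl⟩
    · exact maxl_disjoint hlam hS hT hne
    · exact Finset.disjoint_singleton_right.2 (hy S hS)
    · exact (Finset.disjoint_singleton_right.2 (hx T hT)).symm
    · exact Finset.disjoint_singleton_right.2 (by simpa using fun h => hne (by rw [h]))
  sup_parts := by
    apply le_antisymm (Finset.sup_le fun S _ => le_top)
    intro x _
    rw [Finset.mem_sup]
    by_cases hx : ∀ T ∈ maxl F k, x ∉ T
    · exact ⟨{x}, mem_treeParts.2 (Or.inr ⟨x, hx, rfl⟩), mem_singleton_self x⟩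
    · push_neg at hx
      obtain ⟨T, hT, hxT⟩ := hx
      exact ⟨T, mem_treeParts.2 (Or.inl hT), hxT⟩
  bot_notMem := by
    rw [Finset.bot_eq_empty, mem_treeParts]
    rintro (h | ⟨x, -, h⟩)
    · have := hcard _ (maxl_mem_F h)
      simp at this
    · exact absurd h.symm (singleton_ne_empty x)

@[simp] lemma treePartition_parts {F : Finset (Finset (Fin n))} {hlam : Laminar F}
    {hcard : ∀ S ∈ F, 3 ≤ S.card} {k : ℕ} :
    (treePartition F hlam hcard k).parts = treeParts F k := rfl


lemma levelF_eq_empty {F : Finset (Finset (Fin n))} (hc : ∀ S ∈ F, 3 ≤ S.card) {k : ℕ}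
    (hk : k ≤ 2) : levelF F k = ∅ := by
  rw [eq_empty_iff_forall_notMem]
  intro S hS
  rw [mem_levelF] at hS
  have := hc S hS.1
  omega

lemma treeParts_congr {F : Finset (Finset (Fin n))} {j k : ℕ}
    (h : levelF F j = levelF F k) : treeParts F j = treeParts F k := by
  unfold treeParts maxl
  rw [h]

lemma treeParts_of_levelF_empty {F : Finset (Finset (Fin n))} {k : ℕ}
    (h : levelF F k = ∅) :
    treeParts F k = Finset.univ.image fun x => ({x} : Finset (Fin n)) := by
  unfold treeParts maxl
  rw [h]
  simp

lemma card_le_of_isTreeFam {F : Finset (Finset (Fin n))} (hF : IsTreeFam n F)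
    {S : Finset (Fin n)} (hS : S ∈ F) : S.card ≤ n - 1 := by
  by_contra h
  have hn' : S.card ≤ n := by
    have := card_le_card (subset_univ S)
    simpa using this
  have hcard : S.card = n := by omega
  have hSuniv : S = Finset.univ := by
    apply Finset.eq_univ_of_card
    simpa using hcard
  have hroot : rootChildSets n F = {S} := by
    apply Finset.eq_singleton_iff_unique_mem.2
    constructor
    · rw [rootChildSets, mem_filter]
      refine ⟨hS, fun U hU hSU => ?_⟩
      exact hSU.not_subset (hSuniv ▸ subset_univ U)
    · intro T hT
      rw [rootChildSets, mem_filter] at hT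
      by_contra hne
      exact hT.2 S hS (ssubset_of_subset_of_ne (hSuniv ▸ subset_univ T) hne)
  have hfree : rootFree n F = ∅ := by
    rw [eq_empty_iff_forall_notMem]
    intro x hx
    rw [rootFree, mem_filter] at hx
    exact hx.2 S hS (hSuniv ▸ mem_univ x)
  have := hF.2.2.2
  rw [rootChildCount, hroot, hfree] at this
  simp at this

lemma levelF_eq_self {F : Finset (Finset (Fin n))} (hF : IsTreeFam n F) {k : ℕ}
    (hk : n - 1 ≤ k) : levelF F k = F := by
  apply Finset.filter_true_of_mem
  intro S hS
  exact (card_le_of_isTreeFam hF hS).trans hk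

lemma filter_parts_of_mem {P : Finpartition (Finset.univ : Finset (Fin n))}
    {T : Finset (Fin n)} (hT : T ∈ P.parts) : P.parts.filter (· ⊆ T) = {T} := by
  apply Finset.eq_singleton_iff_unique_mem.2
  refine ⟨mem_filter.2 ⟨hT, subset_rfl⟩, fun S hS => ?_⟩
  rw [mem_filter] at hS
  obtain ⟨x, hx⟩ := P.nonempty_of_mem_parts hS.1
  exact P.eq_of_mem_parts hS.1 hT hx (hS.2 hx)

lemma free_mono {F : Finset (Finset (Fin n))} {j k : ℕ} (hjk : j ≤ k) {x : Fin n}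
    (hx : ∀ T ∈ maxl F k, x ∉ T) : ∀ T ∈ maxl F j, x ∉ T := by
  intro T hT hxT
  have hT' : T ∈ levelF F k :=
    mem_levelF.2 ⟨maxl_mem_F hT, ((mem_maxl.1 hT).1.2).trans hjk⟩
  obtain ⟨U, hU, hTU⟩ := exists_maxl_superset hT'
  exact hx U hU (hTU hxT)

lemma maxl_mono {F : Finset (Finset (Fin n))} {j k : ℕ} (hjk : j ≤ k)
    {T : Finset (Fin n)} (hT : T ∈ maxl F k) (hTj : T.card ≤ j) : T ∈ maxl F j := by
  rw [mem_maxl] at hT ⊢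
  refine ⟨⟨hT.1.1, hTj⟩, fun U hU hTU => ?_⟩
  rw [mem_levelF] at hU
  exact hT.2 U (mem_levelF.2 ⟨hU.1, hU.2.trans hjk⟩) hTU

lemma forward_count {F : Finset (Finset (Fin n))} (hF : IsTreeFam n F) {k : ℕ}
    (hk : 3 ≤ k) {T : Finset (Fin n)} (hT : T ∈ maxl F k) (hTk : T.card = k) :
    3 ≤ ((treeParts F (k - 1)).filter (· ⊆ T)).card := by
  obtain ⟨hlam, hcard, hchild, -⟩ := hF
  have hTF : T ∈ F := maxl_mem_F hT
  have hsub : childSets n F T ∪ (freeIn n F T).image (fun x => ({x} : Finset (Fin n)))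
      ⊆ (treeParts F (k - 1)).filter (· ⊆ T) := by
    intro W hW
    rw [mem_union] at hW
    rcases hW with hW | hW
    · rw [childSets, mem_filter] at hW
      obtain ⟨hWF, hWT, hmid⟩ := hW
      refine mem_filter.2 ⟨mem_treeParts.2 (Or.inl ?_), hWT.subset⟩
      rw [mem_maxl]
      have hWk : W.card ≤ k - 1 := by
        have := card_lt_card hWT
        omega
      refine ⟨⟨hWF, hWk⟩, fun U hU hWU => ?_⟩
      rw [mem_levelF] at hU
      rcases hlam U hU.1 T hTF with h | h | h
      · have hUT : U ≠ T := fun h' => by rw [h'] at hU; omega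
        exact hmid U hU.1 ⟨hWU, ssubset_of_subset_of_ne h hUT⟩
      · have := card_le_card h
        omega
      · obtain ⟨x, hx⟩ := card_pos.1 (show 0 < W.card by have := hcard W hWF; omega)
        exact Finset.disjoint_left.1 h (hWU.subset hx) (hWT.subset hx)
    · rw [mem_image] at hW
      obtain ⟨x, hx, rfl⟩ := hW
      rw [freeIn, mem_filter] at hx
      refine mem_filter.2 ⟨mem_treeParts.2 (Or.inr ⟨x, ?_, rfl⟩),
        singleton_subset_iff.2 hx.1⟩
      intro M hM hxM
      rw [mem_maxl] at hM
      rcases hlam M hM.1.1 T hTF with h | h | h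
      · have hMT : M ≠ T := fun h' => by
          have := hM.1.2
          rw [h'] at this
          omega
        exact hx.2 M hM.1.1 (ssubset_of_subset_of_ne h hMT) hxM
      · have := card_le_card h
        have := hM.1.2
        omega
      · exact Finset.disjoint_left.1 h hxM hx.1
  have hdisj : Disjoint (childSets n F T)
      ((freeIn n F T).image fun x => ({x} : Finset (Fin n))) := by
    rw [Finset.disjoint_left]
    intro Q hQ hQ'
    rw [childSets, mem_filter] at hQ
    rw [mem_image] at hQ'
    obtain ⟨x, -, rfl⟩ := hQ'
    have := hcard _ hQ.1
    simp at this
  calc 3 ≤ childCount n F T := hchild T hTF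
    _ = (childSets n F T ∪ (freeIn n F T).image fun x => ({x} : Finset (Fin n))).card := by
        rw [card_union_of_disjoint hdisj,
          Finset.card_image_of_injective _ Finset.singleton_injective, childCount]
    _ ≤ _ := card_le_card hsub

lemma stepRel_treePartition {F : Finset (Finset (Fin n))} (hF : IsTreeFam n F) {k : ℕ}
    (hk : 3 ≤ k) :
    StepRel n k (treePartition F hF.1 hF.2.1 (k - 1)) (treePartition F hF.1 hF.2.1 k) := by
  constructor
  · intro S hS
    change S ∈ treeParts F (k - 1) at hS; rw [mem_treeParts] at hS
    rcases hS with hS | ⟨x, hx, rfl⟩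
    · have hS' : S ∈ levelF F k :=
        mem_levelF.2 ⟨maxl_mem_F hS, ((mem_maxl.1 hS).1.2).trans (by omega)⟩
      obtain ⟨U, hU, hSU⟩ := exists_maxl_superset hS'
      exact ⟨U, mem_treeParts.2 (Or.inl hU), hSU⟩
    · obtain ⟨T, hT, hxT⟩ := (treePartition F hF.1 hF.2.1 k).exists_mem (mem_univ x)
      exact ⟨T, hT, singleton_subset_iff.2 hxT⟩
  · intro T hT
    change T ∈ treeParts F k at hT; rw [mem_treeParts] at hT
    rcases hT with hT | ⟨x, hx, rfl⟩
    · by_cases hc : T.card ≤ k - 1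
      · left
        exact filter_parts_of_mem (P := treePartition F hF.1 hF.2.1 (k - 1))
          (mem_treeParts.2 (Or.inl (maxl_mono (by omega) hT hc)))
      · right
        have hTk : T.card = k := by
          have := (mem_maxl.1 hT).1.2
          omega
        exact ⟨hTk, forward_count hF hk hT hTk⟩
    · left
      exact filter_parts_of_mem (P := treePartition F hF.1 hF.2.1 (k - 1))
        (mem_treeParts.2 (Or.inr ⟨x, free_mono (by omega) hx, rfl⟩))


set_option linter.unusedSectionVars false

def chainFam (P : ℕ → Finpartition (Finset.univ : Finset (Fin n))) :
    Finset (Finset (Fin n)) :=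
  (Finset.range n).biUnion fun k => (P k).parts.filter fun S => 2 ≤ S.card

lemma discrete_parts {Q : Finpartition (Finset.univ : Finset (Fin n))}
    (h : ∀ S ∈ Q.parts, S.card = 1) :
    Q.parts = Finset.univ.image fun x => ({x} : Finset (Fin n)) := by
  ext S
  rw [mem_image]
  constructor
  · intro hS
    obtain ⟨x, hx⟩ := Finset.card_eq_one.1 (h S hS)
    exact ⟨x, mem_univ x, hx.symm⟩
  · rintro ⟨x, -, rfl⟩
    obtain ⟨T, hT, hxT⟩ := Q.exists_mem (mem_univ x)
    obtain ⟨y, rfl⟩ := Finset.card_eq_one.1 (h T hT)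
    rw [mem_singleton] at hxT
    rw [hxT]
    exact hT

section Backward

variable {P : ℕ → Finpartition (Finset.univ : Finset (Fin n))}
variable (hn : 2 ≤ n)
variable (h1 : ∀ S ∈ (P 2).parts, S.card = 1)
variable (h2 : ∀ k, 3 ≤ k → k ≤ n - 1 → StepRel n k (P (k - 1)) (P k))
variable (h3 : ∀ k, k ≤ 2 → P k = P 2)
variable (h4 : ∀ k, n - 1 ≤ k → P k = P (n - 1))
include hn h1 h2 h3 h4

lemma refine_succ : ∀ k, ∀ S ∈ (P k).parts, ∃ T ∈ (P (k + 1)).parts, S ⊆ T := by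
  intro k S hS
  rcases le_or_gt (k + 1) 2 with h | h
  · rw [h3 (k + 1) h, ← h3 k (by omega)]
    exact ⟨S, hS, subset_rfl⟩
  rcases le_or_gt (k + 1) (n - 1) with h' | h'
  · exact (h2 (k + 1) (by omega) h').1 S hS
  · rw [h4 (k + 1) (by omega), ← h4 k (by omega)]
    exact ⟨S, hS, subset_rfl⟩

lemma refine_le {j k : ℕ} (hjk : j ≤ k) :
    ∀ S ∈ (P j).parts, ∃ T ∈ (P k).parts, S ⊆ T := by
  induction k, hjk using Nat.le_induction with
  | base => exact fun S hS => ⟨S, hS, subset_rfl⟩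
  | succ k hk IH =>
    intro S hS
    obtain ⟨T, hT, hST⟩ := IH S hS
    obtain ⟨U, hU, hTU⟩ := refine_succ hn h1 h2 h3 h4 k T hT
    exact ⟨U, hU, hST.trans hTU⟩

lemma step_mem_pred {k : ℕ} (hk3 : 3 ≤ k) (hkn : k ≤ n - 1) {S : Finset (Fin n)}
    (hS : S ∈ (P k).parts)
    (heq : (P (k - 1)).parts.filter (· ⊆ S) = {S}) : S ∈ (P (k - 1)).parts := by
  have : S ∈ (P (k - 1)).parts.filter (· ⊆ S) := by
    rw [heq]; exact mem_singleton_self S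
  exact (mem_filter.1 this).1

lemma parts_card_le : ∀ k, 2 ≤ k → ∀ S ∈ (P k).parts, S.card ≤ k := by
  intro k hk
  induction k, hk using Nat.le_induction with
  | base => intro S hS; rw [h1 S hS]; omega
  | succ k hk IH =>
    intro S hS
    rcases le_or_gt (k + 1) (n - 1) with h' | h'
    · rcases (h2 (k + 1) (by omega) h').2 S hS with heq | ⟨hc, -⟩
      · have := IH S (step_mem_pred hn h1 h2 h3 h4 (by omega) h' hS heq)
        omega
      · omega
    · rw [h4 (k + 1) (by omega), ← h4 k (by omega)] at hS
      have := IH S hS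
      omega

lemma parts_mem_card : ∀ k, ∀ S ∈ (P k).parts, 2 ≤ S.card →
    3 ≤ S.card ∧ S ∈ (P S.card).parts := by
  have main : ∀ k, 2 ≤ k → ∀ S ∈ (P k).parts, 2 ≤ S.card →
      3 ≤ S.card ∧ S ∈ (P S.card).parts := by
    intro k hk
    induction k, hk using Nat.le_induction with
    | base => intro S hS hc; have := h1 S hS; omega
    | succ k hk IH =>
      intro S hS hc
      rcases le_or_gt (k + 1) (n - 1) with h' | h'
      · rcases (h2 (k + 1) (by omega) h').2 S hS with heq | ⟨hcard, -⟩
        · exact IH S (step_mem_pred hn h1 h2 h3 h4 (by omega) h' hS heq) hc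
        · exact ⟨by omega, hcard ▸ hS⟩
      · rw [h4 (k + 1) (by omega), ← h4 k (by omega)] at hS
        exact IH S hS hc
  intro k S hS hc
  rcases le_or_gt k 2 with h | h
  · rw [h3 k h] at hS
    have := h1 S hS
    omega
  · exact main k (by omega) S hS hc

lemma parts_card_lt : ∀ k, ∀ S ∈ (P k).parts, S.card < n := by
  intro k S hS
  rcases le_or_gt k 2 with h | h
  · rw [h3 k h] at hS
    have := h1 S hS
    omega
  · rcases le_or_gt k (n - 1) with h' | h'
    · have := parts_card_le hn h1 h2 h3 h4 k (by omega) S hS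
      omega
    · rw [h4 k (by omega)] at hS
      rcases le_or_gt (n - 1) 2 with h'' | h''
      · rw [h3 _ h''] at hS
        have := h1 S hS
        omega
      · have := parts_card_le hn h1 h2 h3 h4 (n - 1) (by omega) S hS
        omega

lemma mem_chainFam {S : Finset (Fin n)} :
    S ∈ chainFam P ↔ 2 ≤ S.card ∧ S ∈ (P S.card).parts := by
  constructor
  · intro h
    rw [chainFam, mem_biUnion] at h
    obtain ⟨k, -, hS⟩ := h
    rw [mem_filter] at hS
    exact ⟨hS.2, (parts_mem_card hn h1 h2 h3 h4 k S hS.1 hS.2).2⟩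
  · rintro ⟨h2c, hS⟩
    rw [chainFam, mem_biUnion]
    exact ⟨S.card, mem_range.2 (parts_card_lt hn h1 h2 h3 h4 _ S hS),
      mem_filter.2 ⟨hS, h2c⟩⟩

lemma chainFam_card3 : ∀ S ∈ chainFam P, 3 ≤ S.card := by
  intro S hS
  obtain ⟨h2c, hS'⟩ := (mem_chainFam hn h1 h2 h3 h4).1 hS
  exact (parts_mem_card hn h1 h2 h3 h4 _ S hS' h2c).1

lemma laminar_chainFam : Laminar (chainFam P) := by
  have key : ∀ S T : Finset (Fin n), S ∈ chainFam P → T ∈ chainFam P →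
      S.card ≤ T.card → S ⊆ T ∨ Disjoint S T := by
    intro S T hS hT hc
    obtain ⟨hS2, hSp⟩ := (mem_chainFam hn h1 h2 h3 h4).1 hS
    obtain ⟨hT2, hTp⟩ := (mem_chainFam hn h1 h2 h3 h4).1 hT
    obtain ⟨W, hW, hSW⟩ := refine_le hn h1 h2 h3 h4 hc S hSp
    by_cases hWT : W = T
    · exact Or.inl (hWT ▸ hSW)
    · exact Or.inr (((P T.card).disjoint (mem_coe.2 hW) (mem_coe.2 hTp) hWT).mono_left hSW)
  intro S hS T hT
  rcases le_total S.card T.card with h | h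
  · rcases key S T hS hT h with h' | h'
    exacts [Or.inl h', Or.inr (Or.inr h')]
  · rcases key T S hT hS h with h' | h'
    exacts [Or.inr (Or.inl h'), Or.inr (Or.inr h'.symm)]

/-- If `S` is a part of `P m` and `W` a part of an earlier partition meeting `S`,
then `W ⊆ S`. -/
lemma part_le_subset {m j : ℕ} (hj : j ≤ m) {S W : Finset (Fin n)}
    (hS : S ∈ (P m).parts) (hW : W ∈ (P j).parts) {x : Fin n} (hxW : x ∈ W)
    (hxS : x ∈ S) : W ⊆ S := by
  obtain ⟨Z, hZ, hWZ⟩ := refine_le hn h1 h2 h3 h4 hj W hW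
  have : Z = S := (P m).eq_of_mem_parts hZ hS (hWZ hxW) hxS
  exact this ▸ hWZ

lemma chainFam_not_mem_pred {S : Finset (Fin n)} (hSF : S ∈ chainFam P) :
    S ∉ (P (S.card - 1)).parts := by
  intro h
  have h3c := chainFam_card3 hn h1 h2 h3 h4 S hSF
  have := parts_card_le hn h1 h2 h3 h4 (S.card - 1) (by omega) S h
  omega

lemma childSets_eq {S : Finset (Fin n)} (hSF : S ∈ chainFam P) :
    childSets n (chainFam P) S ∪
      (freeIn n (chainFam P) S).image (fun x => ({x} : Finset (Fin n)))
      = (P (S.card - 1)).parts.filter (· ⊆ S) := by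
  obtain ⟨hc2, hSm⟩ := (mem_chainFam hn h1 h2 h3 h4).1 hSF
  have hc3 : 3 ≤ S.card := chainFam_card3 hn h1 h2 h3 h4 S hSF
  have hSnot := chainFam_not_mem_pred hn h1 h2 h3 h4 hSF
  ext W
  rw [mem_union, mem_filter]
  constructor
  · rintro (hW | hW)
    · rw [childSets, mem_filter] at hW
      obtain ⟨hWF, hWS, hmid⟩ := hW
      obtain ⟨hW2, hWp⟩ := (mem_chainFam hn h1 h2 h3 h4).1 hWF
      have hWcard : W.card ≤ S.card - 1 := by
        have := card_lt_card hWS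
        omega
      obtain ⟨Z, hZ, hWZ⟩ := refine_le hn h1 h2 h3 h4 hWcard W hWp
      obtain ⟨x, hxW⟩ := card_pos.1 (show 0 < W.card by omega)
      have hZS : Z ⊆ S := part_le_subset hn h1 h2 h3 h4 (by omega) hSm hZ
        (hWZ hxW) (hWS.subset hxW)
      rcases le_or_gt 2 Z.card with h2Z | h1Z
      · have hZF : Z ∈ chainFam P := (mem_chainFam hn h1 h2 h3 h4).2
          ⟨h2Z, (parts_mem_card hn h1 h2 h3 h4 _ Z hZ h2Z).2⟩
        have hZneS : Z ≠ S := fun h => hSnot (h ▸ hZ)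
        have hWeqZ : W = Z := by
          by_contra hne
          exact hmid Z hZF ⟨ssubset_of_subset_of_ne hWZ hne,
            ssubset_of_subset_of_ne hZS hZneS⟩
        exact ⟨hWeqZ ▸ hZ, hWeqZ ▸ hZS⟩
      · have := card_le_card hWZ
        omega
    · rw [mem_image] at hW
      obtain ⟨x, hx, rfl⟩ := hW
      rw [freeIn, mem_filter] at hx
      obtain ⟨Z, hZ, hxZ⟩ := (P (S.card - 1)).exists_mem (mem_univ x)
      have hZS : Z ⊆ S := part_le_subset hn h1 h2 h3 h4 (by omega) hSm hZ hxZ hx.1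
      have hZcard : Z.card ≤ 1 := by
        by_contra h
        push_neg at h
        have hZF : Z ∈ chainFam P := (mem_chainFam hn h1 h2 h3 h4).2
          ⟨h, (parts_mem_card hn h1 h2 h3 h4 _ Z hZ h).2⟩
        have hZneS : Z ≠ S := fun h' => hSnot (h' ▸ hZ)
        exact hx.2 Z hZF (ssubset_of_subset_of_ne hZS hZneS) hxZ
      have hZx : Z = {x} := by
        apply Finset.eq_singleton_iff_unique_mem.2
        exact ⟨hxZ, fun y hy => Finset.card_le_one.1 hZcard y hy x hxZ⟩
      exact ⟨hZx ▸ hZ, singleton_subset_iff.2 hx.1⟩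
  · rintro ⟨hWp, hWS⟩
    have hWne : W ≠ S := fun h => hSnot (h ▸ hWp)
    have hWss : W ⊂ S := ssubset_of_subset_of_ne hWS hWne
    rcases le_or_gt 2 W.card with h2W | h1W
    · left
      have hWF : W ∈ chainFam P := (mem_chainFam hn h1 h2 h3 h4).2
        ⟨h2W, (parts_mem_card hn h1 h2 h3 h4 _ W hWp h2W).2⟩
      rw [childSets, mem_filter]
      refine ⟨hWF, hWss, fun U hUF hU => ?_⟩
      obtain ⟨hU2, hUp⟩ := (mem_chainFam hn h1 h2 h3 h4).1 hUF
      have hUcard : U.card ≤ S.card - 1 := by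
        have := card_lt_card hU.2
        omega
      obtain ⟨W', hW', hUW'⟩ := refine_le hn h1 h2 h3 h4 hUcard U hUp
      obtain ⟨x, hxW⟩ := card_pos.1 (show 0 < W.card by omega)
      have : W = W' := (P (S.card - 1)).eq_of_mem_parts hWp hW' hxW
        (hUW' (hU.1.subset hxW))
      exact hU.1.not_subset (this ▸ hUW')
    · right
      have hW1 : W.card = 1 := by
        have := Finset.card_pos.2 ((P (S.card - 1)).nonempty_of_mem_parts hWp)
        omega
      obtain ⟨x, rfl⟩ := Finset.card_eq_one.1 hW1
      rw [mem_image]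
      refine ⟨x, ?_, rfl⟩
      rw [freeIn, mem_filter]
      refine ⟨singleton_subset_iff.1 hWS, fun T hTF hTS hxT => ?_⟩
      obtain ⟨hT2, hTp⟩ := (mem_chainFam hn h1 h2 h3 h4).1 hTF
      have hTcard : T.card ≤ S.card - 1 := by
        have := card_lt_card hTS
        omega
      obtain ⟨W', hW', hTW'⟩ := refine_le hn h1 h2 h3 h4 hTcard T hTp
      have : ({x} : Finset (Fin n)) = W' := (P (S.card - 1)).eq_of_mem_parts hWp hW'
        (mem_singleton_self x) (hTW' hxT)
      have := card_le_card (this ▸ hTW')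
      simp at this
      omega

lemma three_le_childCount {S : Finset (Fin n)} (hSF : S ∈ chainFam P) :
    3 ≤ childCount n (chainFam P) S := by
  obtain ⟨hc2, hSm⟩ := (mem_chainFam hn h1 h2 h3 h4).1 hSF
  have hc3 : 3 ≤ S.card := chainFam_card3 hn h1 h2 h3 h4 S hSF
  have hSnot := chainFam_not_mem_pred hn h1 h2 h3 h4 hSF
  have hlt : S.card < n := parts_card_lt hn h1 h2 h3 h4 _ S hSm
  have hdisj : Disjoint (childSets n (chainFam P) S)
      ((freeIn n (chainFam P) S).image fun x => ({x} : Finset (Fin n))) := by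
    rw [Finset.disjoint_left]
    intro Q hQ hQ'
    rw [childSets, mem_filter] at hQ
    rw [mem_image] at hQ'
    obtain ⟨x, -, rfl⟩ := hQ'
    have := chainFam_card3 hn h1 h2 h3 h4 _ hQ.1
    simp at this
  have hcount : childCount n (chainFam P) S
      = ((P (S.card - 1)).parts.filter (· ⊆ S)).card := by
    rw [← childSets_eq hn h1 h2 h3 h4 hSF, card_union_of_disjoint hdisj,
      Finset.card_image_of_injective _ Finset.singleton_injective, childCount]
  rw [hcount]
  rcases (h2 S.card hc3 (by omega)).2 S hSm with heq | ⟨-, hc⟩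
  · exact absurd (step_mem_pred hn h1 h2 h3 h4 hc3 (by omega) hSm heq) hSnot
  · exact hc

lemma rootSets_eq :
    rootChildSets n (chainFam P) ∪
      (rootFree n (chainFam P)).image (fun x => ({x} : Finset (Fin n)))
      = (P (n - 1)).parts := by
  ext W
  rw [mem_union]
  constructor
  · rintro (hW | hW)
    · rw [rootChildSets, mem_filter] at hW
      obtain ⟨hWF, hmax⟩ := hW
      obtain ⟨hW2, hWp⟩ := (mem_chainFam hn h1 h2 h3 h4).1 hWF
      have hWcard : W.card ≤ n - 1 := by
        have := parts_card_lt hn h1 h2 h3 h4 _ W hWp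
        omega
      obtain ⟨Z, hZ, hWZ⟩ := refine_le hn h1 h2 h3 h4 hWcard W hWp
      rcases le_or_gt 2 Z.card with h2Z | h1Z
      · have hZF : Z ∈ chainFam P := (mem_chainFam hn h1 h2 h3 h4).2
          ⟨h2Z, (parts_mem_card hn h1 h2 h3 h4 _ Z hZ h2Z).2⟩
        have : W = Z := by
          by_contra hne
          exact hmax Z hZF (ssubset_of_subset_of_ne hWZ hne)
        exact this ▸ hZ
      · have := card_le_card hWZ
        omega
    · rw [mem_image] at hW
      obtain ⟨x, hx, rfl⟩ := hW
      rw [rootFree, mem_filter] at hx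
      obtain ⟨Z, hZ, hxZ⟩ := (P (n - 1)).exists_mem (mem_univ x)
      have hZcard : Z.card ≤ 1 := by
        by_contra h
        push_neg at h
        have hZF : Z ∈ chainFam P := (mem_chainFam hn h1 h2 h3 h4).2
          ⟨h, (parts_mem_card hn h1 h2 h3 h4 _ Z hZ h).2⟩
        exact hx.2 Z hZF hxZ
      have hZx : Z = {x} := by
        apply Finset.eq_singleton_iff_unique_mem.2
        exact ⟨hxZ, fun y hy => Finset.card_le_one.1 hZcard y hy x hxZ⟩
      exact hZx ▸ hZ
  · intro hWp
    rcases le_or_gt 2 W.card with h2W | h1W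
    · left
      have hWF : W ∈ chainFam P := (mem_chainFam hn h1 h2 h3 h4).2
        ⟨h2W, (parts_mem_card hn h1 h2 h3 h4 _ W hWp h2W).2⟩
      rw [rootChildSets, mem_filter]
      refine ⟨hWF, fun U hUF hWU => ?_⟩
      obtain ⟨hU2, hUp⟩ := (mem_chainFam hn h1 h2 h3 h4).1 hUF
      have hUcard : U.card ≤ n - 1 := by
        have := parts_card_lt hn h1 h2 h3 h4 _ U hUp
        omega
      obtain ⟨W', hW', hUW'⟩ := refine_le hn h1 h2 h3 h4 hUcard U hUp
      obtain ⟨x, hxW⟩ := card_pos.1 (show 0 < W.card by omega)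
      have : W = W' := (P (n - 1)).eq_of_mem_parts hWp hW' hxW
        (hUW' (hWU.subset hxW))
      exact hWU.not_subset (this ▸ hUW')
    · right
      have hW1 : W.card = 1 := by
        have := Finset.card_pos.2 ((P (n - 1)).nonempty_of_mem_parts hWp)
        omega
      obtain ⟨x, rfl⟩ := Finset.card_eq_one.1 hW1
      rw [mem_image]
      refine ⟨x, ?_, rfl⟩
      rw [rootFree, mem_filter]
      refine ⟨mem_univ x, fun T hTF hxT => ?_⟩
      obtain ⟨hT2, hTp⟩ := (mem_chainFam hn h1 h2 h3 h4).1 hTF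
      have hTcard : T.card ≤ n - 1 := by
        have := parts_card_lt hn h1 h2 h3 h4 _ T hTp
        omega
      obtain ⟨W', hW', hTW'⟩ := refine_le hn h1 h2 h3 h4 hTcard T hTp
      have : ({x} : Finset (Fin n)) = W' := (P (n - 1)).eq_of_mem_parts hWp hW'
        (mem_singleton_self x) (hTW' hxT)
      have := card_le_card (this ▸ hTW')
      simp at this
      omega

lemma two_le_rootChildCount : 2 ≤ rootChildCount n (chainFam P) := by
  have hdisj : Disjoint (rootChildSets n (chainFam P))
      ((rootFree n (chainFam P)).image fun x => ({x} : Finset (Fin n))) := by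
    rw [Finset.disjoint_left]
    intro Q hQ hQ'
    rw [rootChildSets, mem_filter] at hQ
    rw [mem_image] at hQ'
    obtain ⟨x, -, rfl⟩ := hQ'
    have := chainFam_card3 hn h1 h2 h3 h4 _ hQ.1
    simp at this
  have hcount : rootChildCount n (chainFam P) = (P (n - 1)).parts.card := by
    rw [← rootSets_eq hn h1 h2 h3 h4, card_union_of_disjoint hdisj,
      Finset.card_image_of_injective _ Finset.singleton_injective, rootChildCount]
  rw [hcount]
  by_contra h
  push_neg at h
  have huniv : (Finset.univ : Finset (Fin n)).Nonempty := ⟨⟨0, by omega⟩, mem_univ _⟩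
  have hne : (P (n - 1)).parts.Nonempty := by
    rw [Finpartition.parts_nonempty_iff]
    rw [Finset.bot_eq_empty]
    exact huniv.ne_empty
  have hcard1 : (P (n - 1)).parts.card = 1 := by
    have := Finset.card_pos.2 hne
    omega
  obtain ⟨T, hT⟩ := Finset.card_eq_one.1 hcard1
  have hTuniv : T = Finset.univ := by
    have := (P (n - 1)).sup_parts
    rw [hT, Finset.sup_singleton] at this
    exact this
  have := parts_card_lt hn h1 h2 h3 h4 (n - 1) T (by rw [hT]; exact mem_singleton_self T)
  rw [hTuniv] at this
  simp at this

lemma isTreeFam_chainFam : IsTreeFam n (chainFam P) :=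
  ⟨laminar_chainFam hn h1 h2 h3 h4, chainFam_card3 hn h1 h2 h3 h4,
    fun S hS => three_le_childCount hn h1 h2 h3 h4 hS,
    two_le_rootChildCount hn h1 h2 h3 h4⟩



lemma maxl_chainFam {k : ℕ} (hk2 : 2 ≤ k) :
    maxl (chainFam P) k = (P k).parts.filter fun S => 2 ≤ S.card := by
  ext S
  rw [mem_maxl, mem_filter]
  constructor
  · rintro ⟨⟨hSF, hSk⟩, hmax⟩
    obtain ⟨h2S, hSp⟩ := (mem_chainFam hn h1 h2 h3 h4).1 hSF
    obtain ⟨W, hW, hSW⟩ := refine_le hn h1 h2 h3 h4 hSk S hSp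
    by_cases hSWeq : S = W
    · exact ⟨hSWeq ▸ hW, h2S⟩
    · exfalso
      have hWS : S ⊂ W := ssubset_of_subset_of_ne hSW hSWeq
      have h2W : 2 ≤ W.card := le_trans h2S (card_le_card hSW)
      have hWF : W ∈ chainFam P := (mem_chainFam hn h1 h2 h3 h4).2
        ⟨h2W, (parts_mem_card hn h1 h2 h3 h4 _ W hW h2W).2⟩
      have hWk : W.card ≤ k := parts_card_le hn h1 h2 h3 h4 k hk2 W hW
      exact hmax W (mem_levelF.2 ⟨hWF, hWk⟩) hWS
  · rintro ⟨hSp, h2S⟩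
    have hSF : S ∈ chainFam P := (mem_chainFam hn h1 h2 h3 h4).2
      ⟨h2S, (parts_mem_card hn h1 h2 h3 h4 _ S hSp h2S).2⟩
    refine ⟨⟨hSF, parts_card_le hn h1 h2 h3 h4 k hk2 S hSp⟩, fun U hU hSU => ?_⟩
    rw [mem_levelF] at hU
    obtain ⟨h2U, hUp⟩ := (mem_chainFam hn h1 h2 h3 h4).1 hU.1
    obtain ⟨W, hW, hUW⟩ := refine_le hn h1 h2 h3 h4 hU.2 U hUp
    obtain ⟨x, hx⟩ := card_pos.1 (show 0 < S.card by omega)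
    have : S = W := (P k).eq_of_mem_parts hSp hW hx (hUW (hSU.subset hx))
    exact hSU.not_subset (this ▸ hUW)

lemma free_iff_chainFam {k : ℕ} (hk2 : 2 ≤ k) {x : Fin n} :
    (∀ T ∈ maxl (chainFam P) k, x ∉ T) ↔ ({x} : Finset (Fin n)) ∈ (P k).parts := by
  constructor
  · intro h
    obtain ⟨W, hW, hxW⟩ := (P k).exists_mem (mem_univ x)
    rcases le_or_gt 2 W.card with h2W | h1W
    · exact absurd hxW (h W (by
        rw [maxl_chainFam hn h1 h2 h3 h4 hk2]
        exact mem_filter.2 ⟨hW, h2W⟩))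
    · have hW1 : W.card = 1 := by
        have := Finset.card_pos.2 ((P k).nonempty_of_mem_parts hW)
        omega
      obtain ⟨y, rfl⟩ := Finset.card_eq_one.1 hW1
      rw [mem_singleton] at hxW
      rw [← hxW] at hW
      exact hW
  · intro hx T hT hxT
    rw [maxl_chainFam hn h1 h2 h3 h4 hk2, mem_filter] at hT
    have heq : ({x} : Finset (Fin n)) = T :=
      (P k).eq_of_mem_parts hx hT.1 (mem_singleton_self x) hxT
    have := hT.2
    rw [← heq] at this
    simp at this

lemma treeParts_chainFam_main {k : ℕ} (hk2 : 2 ≤ k) :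
    treeParts (chainFam P) k = (P k).parts := by
  ext S
  rw [mem_treeParts]
  constructor
  · rintro (hS | ⟨x, hx, rfl⟩)
    · rw [maxl_chainFam hn h1 h2 h3 h4 hk2, mem_filter] at hS
      exact hS.1
    · exact (free_iff_chainFam hn h1 h2 h3 h4 hk2).1 hx
  · intro hS
    rcases le_or_gt 2 S.card with h2S | h1S
    · refine Or.inl ?_
      rw [maxl_chainFam hn h1 h2 h3 h4 hk2]
      exact mem_filter.2 ⟨hS, h2S⟩
    · have hS1 : S.card = 1 := by
        have := Finset.card_pos.2 ((P k).nonempty_of_mem_parts hS)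
        omega
      obtain ⟨x, rfl⟩ := Finset.card_eq_one.1 hS1
      exact Or.inr ⟨x, (free_iff_chainFam hn h1 h2 h3 h4 hk2).2 hS, rfl⟩


lemma treeParts_chainFam (k : ℕ) : treeParts (chainFam P) k = (P k).parts := by
  rcases le_or_gt k 2 with hk | hk
  · rw [h3 k hk, discrete_parts h1,
      treeParts_of_levelF_empty (levelF_eq_empty (chainFam_card3 hn h1 h2 h3 h4) hk)]
  · exact treeParts_chainFam_main hn h1 h2 h3 h4 (by omega)

end Backward

lemma treeParts_card_one {F : Finset (Finset (Fin n))} (hc : ∀ S ∈ F, 3 ≤ S.card)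
    {k : ℕ} (hk : k ≤ 2) : ∀ S ∈ treeParts F k, S.card = 1 := by
  intro S hS
  rw [treeParts_of_levelF_empty (levelF_eq_empty hc hk)] at hS
  obtain ⟨x, -, rfl⟩ := mem_image.1 hS
  simp

lemma filter_treeParts {F : Finset (Finset (Fin n))} (hcard : ∀ S ∈ F, 3 ≤ S.card)
    (k : ℕ) : (treeParts F k).filter (fun S => 2 ≤ S.card) = maxl F k := by
  ext S
  rw [mem_filter, mem_treeParts]
  constructor
  · rintro ⟨hS | ⟨x, -, rfl⟩, h2⟩
    · exact hS
    · simp at h2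
  · intro hS
    exact ⟨Or.inl hS, by have := hcard S (maxl_mem_F hS); omega⟩

lemma chainFam_treeParts {F : Finset (Finset (Fin n))} (hn : 2 ≤ n)
    (hF : IsTreeFam n F) :
    chainFam (fun k => treePartition F hF.1 hF.2.1 k) = F := by
  ext S
  rw [chainFam, mem_biUnion]
  constructor
  · rintro ⟨k, -, hS⟩
    have hS' : S ∈ (treeParts F k).filter (fun S => 2 ≤ S.card) := hS
    rw [filter_treeParts hF.2.1 k] at hS'
    exact maxl_mem_F hS'
  · intro hS
    refine ⟨S.card, mem_range.2 (by have := card_le_of_isTreeFam hF hS; omega), ?_⟩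
    have : S ∈ (treeParts F S.card).filter (fun S => 2 ≤ S.card) := by
      rw [filter_treeParts hF.2.1]
      rw [mem_maxl]
      refine ⟨⟨hS, le_rfl⟩, fun T hT hST => ?_⟩
      have h1 := card_lt_card hST
      have h2 := (mem_levelF.1 hT).2
      omega
    exact this

/-- The forward map: a rooted tree gives a partition chain. -/
noncomputable def fwd (hn : 2 ≤ n) (F : NRootedTree n) : PartitionChain n :=
  ⟨fun k => treePartition F.1 F.2.1 F.2.2.1 k,
    treeParts_card_one F.2.2.1 le_rfl,
    fun k hk _ => stepRel_treePartition F.2 hk,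
    fun k hk => Finpartition.ext (treeParts_congr
      (by rw [levelF_eq_empty F.2.2.1 hk, levelF_eq_empty F.2.2.1 le_rfl])),
    fun k hk => Finpartition.ext (treeParts_congr
      (by rw [levelF_eq_self F.2 hk, levelF_eq_self F.2 le_rfl]))⟩

/-- The backward map: a partition chain gives a rooted tree. -/
noncomputable def bwd (hn : 2 ≤ n) (Pc : PartitionChain n) : NRootedTree n :=
  ⟨chainFam Pc.1, isTreeFam_chainFam hn Pc.2.1 Pc.2.2.1 Pc.2.2.2.1 Pc.2.2.2.2⟩

end RTPC10

/-- there is a (canonical) bijection between rooted trees with `n` inputs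
and the descending sequences of partitions `(P₂, …, P_{n−1})` described above. -/
theorem rootedTree_equiv_partitionChain (n : ℕ) (hn : 2 ≤ n) :
    Nonempty (NRootedTree n ≃ PartitionChain n) := by
  refine ⟨{ toFun := RTPC10.fwd hn, invFun := RTPC10.bwd hn,
            left_inv := ?_, right_inv := ?_ }⟩
  · intro F
    exact Subtype.ext (RTPC10.chainFam_treeParts hn F.2)
  · intro Pc
    refine Subtype.ext (funext fun k => Finpartition.ext ?_)
    exact RTPC10.treeParts_chainFam hn Pc.2.1 Pc.2.2.1 Pc.2.2.2.1 Pc.2.2.2.2 k
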